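/- In the grid graph G_{M,N}, if a set S of vertices in geodesic mutual visibility contains three vertices in the same row, then S is not in geodesic mutual visibility; equivalently, any set in geodesic mutual visibility contains at most 2 vertices per row and at most 2 vertices per column. -/

import Mathlib

/-- The `M × N` grid graph: vertices `{1,…,M} × {1,…,N}` (modeled as
`Fin M × Fin N`), edges between vertices at L1-distance 1. -/
def gridGraph (M N : ℕ) : SimpleGraph (Fin M × Fin N) where
  Adj a b := Nat.dist (a.1 : ℕ) (b.1 : ℕ) + Nat.dist (a.2 : ℕ) (b.2 : ℕ) = 1
  symm := by
    constructor
    intro a b h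
    simpa [Nat.dist_comm] using h
  loopless := by
    constructor
    intro a h
    simp [Nat.dist_self] at h

/-- Geodesic mutual visibility of a set `S` of vertices. -/
def gmv {V : Type*} (G : SimpleGraph V) (S : Finset V) : Prop :=
  ∀ u ∈ S, ∀ v ∈ S, u ≠ v →
    ∃ p : G.Walk u v, p.length = G.dist u v ∧
      ∀ w ∈ p.support, w ∈ S → w = u ∨ w = v

lemma walk_length_lb {M N : ℕ} : ∀ {u v : Fin M × Fin N}
    (p : (gridGraph M N).Walk u v),
    Nat.dist (u.1 : ℕ) v.1 + Nat.dist (u.2 : ℕ) v.2 ≤ p.length := by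
  intro u v p
  induction p with
  | nil => simp [Nat.dist_self]
  | cons h q ih =>
    have h' : Nat.dist _ _ + Nat.dist _ _ = 1 := h
    simp only [SimpleGraph.Walk.length_cons]
    simp [Nat.dist] at h' ih ⊢
    omega

lemma key {M N : ℕ} : ∀ {u v : Fin M × Fin N} (p : (gridGraph M N).Walk u v),
    u.1 = v.1 → p.length = Nat.dist (u.2 : ℕ) v.2 →
    ∀ b : Fin N, Nat.dist (u.2 : ℕ) b + Nat.dist (b : ℕ) v.2 = Nat.dist (u.2 : ℕ) v.2 →
    (u.1, b) ∈ p.support := by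
  intro u v p
  induction p with
  | @nil x =>
    intro _ hlen b hb
    simp only [SimpleGraph.Walk.length_nil] at hlen
    have hbx : b = x.2 := Fin.ext (by simp [Nat.dist] at hlen hb ⊢; omega)
    subst hbx
    simp
  | @cons x y z h q ih =>
    intro hrow hlen b hb
    have h' : Nat.dist (x.1 : ℕ) y.1 + Nat.dist (x.2 : ℕ) y.2 = 1 := h
    have hlb := walk_length_lb q
    simp only [SimpleGraph.Walk.length_cons] at hlen
    have hr : (x.1 : ℕ) = z.1 := by rw [hrow]
    have hy1 : (y.1 : ℕ) = (z.1 : ℕ) := by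
      simp [Nat.dist] at h' hlb hlen ⊢; omega
    have hyrow : y.1 = z.1 := Fin.ext hy1
    have hqlen : q.length = Nat.dist (y.2 : ℕ) z.2 := by
      simp [Nat.dist] at h' hlb hlen ⊢; omega
    by_cases hbx : b = x.2
    · subst hbx
      simp
    · have hbx' : (b : ℕ) ≠ (x.2 : ℕ) := fun e => hbx (Fin.ext e)
      have hb' : Nat.dist (y.2 : ℕ) b + Nat.dist (b : ℕ) z.2 = Nat.dist (y.2 : ℕ) z.2 := by
        simp [Nat.dist] at h' hlb hlen hb ⊢; omega
      have hmem := ih hyrow hqlen b hb'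
      rw [SimpleGraph.Walk.support_cons]
      right
      rwa [hrow, ← hyrow]

lemma hwalk_aux {M N : ℕ} (r : Fin M) : ∀ (k : ℕ) (a c : Fin N), (a : ℕ) + k = c →
    ∃ p : (gridGraph M N).Walk (r, a) (r, c), p.length = k := by
  intro k
  induction k with
  | zero =>
    intro a c hac
    have : a = c := Fin.ext (by omega)
    subst this
    exact ⟨.nil, rfl⟩
  | succ n ih =>
    intro a c hac
    have hlt : (a : ℕ) + 1 < N := by omega
    set a' : Fin N := ⟨(a : ℕ) + 1, hlt⟩ with ha'
    have hadj : (gridGraph M N).Adj (r, a) (r, a') := by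
      show Nat.dist (r : ℕ) r + Nat.dist (a : ℕ) a' = 1
      simp [Nat.dist_self, ha', Nat.dist]
    obtain ⟨q, hq⟩ := ih a' c (by simp [ha']; omega)
    exact ⟨.cons hadj q, by simp [hq]⟩

lemma hwalk {M N : ℕ} (r : Fin M) (a c : Fin N) :
    ∃ p : (gridGraph M N).Walk (r, a) (r, c), p.length = Nat.dist (a : ℕ) c := by
  rcases le_total (a : ℕ) (c : ℕ) with hle | hle
  · obtain ⟨p, hp⟩ := hwalk_aux r ((c : ℕ) - a) a c (by omega)
    exact ⟨p, by simp [Nat.dist]; omega⟩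
  · obtain ⟨p, hp⟩ := hwalk_aux r ((a : ℕ) - c) c a (by omega)
    exact ⟨p.reverse, by simp [hp, Nat.dist]; omega⟩

lemma no3row {M N : ℕ} {S : Finset (Fin M × Fin N)} (h : gmv (gridGraph M N) S)
    {r : Fin M} {a b c : Fin N} (ha : (r, a) ∈ S) (hb : (r, b) ∈ S) (hc : (r, c) ∈ S)
    (h1 : (a : ℕ) < b) (h2 : (b : ℕ) < c) : False := by
  have hne : (r, a) ≠ (r, c) := by
    simp only [ne_eq, Prod.mk.injEq, true_and]
    intro e; rw [e] at h1; omega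
  obtain ⟨p, hp, hvis⟩ := h _ ha _ hc hne
  obtain ⟨q, hq⟩ := hwalk r a c
  have hub : (gridGraph M N).dist (r, a) (r, c) ≤ Nat.dist (a : ℕ) c :=
    hq ▸ SimpleGraph.dist_le q
  have hlb := walk_length_lb p
  have hlen : p.length = Nat.dist (a : ℕ) c := by
    simp [Nat.dist_self] at hlb; omega
  have hmem := key p rfl hlen b (by simp [Nat.dist]; omega)
  rcases hvis _ hmem hb with e | e <;>
    · simp only [Prod.mk.injEq, true_and] at e
      rw [e] at h1 h2; omega

lemma vkey {M N : ℕ} : ∀ {u v : Fin M × Fin N} (p : (gridGraph M N).Walk u v),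
    u.2 = v.2 → p.length = Nat.dist (u.1 : ℕ) v.1 →
    ∀ b : Fin M, Nat.dist (u.1 : ℕ) b + Nat.dist (b : ℕ) v.1 = Nat.dist (u.1 : ℕ) v.1 →
    (b, u.2) ∈ p.support := by
  intro u v p
  induction p with
  | @nil x =>
    intro _ hlen b hb
    simp only [SimpleGraph.Walk.length_nil] at hlen
    have hbx : b = x.1 := Fin.ext (by simp [Nat.dist] at hlen hb ⊢; omega)
    subst hbx
    simp
  | @cons x y z h q ih =>
    intro hcol hlen b hb
    have h' : Nat.dist (x.1 : ℕ) y.1 + Nat.dist (x.2 : ℕ) y.2 = 1 := h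
    have hlb := walk_length_lb q
    simp only [SimpleGraph.Walk.length_cons] at hlen
    have hr : (x.2 : ℕ) = z.2 := by rw [hcol]
    have hy2 : (y.2 : ℕ) = (z.2 : ℕ) := by
      simp [Nat.dist] at h' hlb hlen ⊢; omega
    have hycol : y.2 = z.2 := Fin.ext hy2
    have hqlen : q.length = Nat.dist (y.1 : ℕ) z.1 := by
      simp [Nat.dist] at h' hlb hlen ⊢; omega
    by_cases hbx : b = x.1
    · subst hbx
      simp
    · have hbx' : (b : ℕ) ≠ (x.1 : ℕ) := fun e => hbx (Fin.ext e)
      have hb' : Nat.dist (y.1 : ℕ) b + Nat.dist (b : ℕ) z.1 = Nat.dist (y.1 : ℕ) z.1 := by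
        simp [Nat.dist] at h' hlb hlen hb ⊢; omega
      have hmem := ih hycol hqlen b hb'
      rw [SimpleGraph.Walk.support_cons]
      right
      rwa [hcol, ← hycol]

lemma vwalk_aux {M N : ℕ} (r : Fin N) : ∀ (k : ℕ) (a c : Fin M), (a : ℕ) + k = c →
    ∃ p : (gridGraph M N).Walk (a, r) (c, r), p.length = k := by
  intro k
  induction k with
  | zero =>
    intro a c hac
    have : a = c := Fin.ext (by omega)
    subst this
    exact ⟨.nil, rfl⟩
  | succ n ih =>
    intro a c hac
    have hlt : (a : ℕ) + 1 < M := by omega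
    set a' : Fin M := ⟨(a : ℕ) + 1, hlt⟩ with ha'
    have hadj : (gridGraph M N).Adj (a, r) (a', r) := by
      show Nat.dist (a : ℕ) a' + Nat.dist (r : ℕ) r = 1
      simp [Nat.dist_self, ha', Nat.dist]
    obtain ⟨q, hq⟩ := ih a' c (by simp [ha']; omega)
    exact ⟨.cons hadj q, by simp [hq]⟩

lemma vwalk {M N : ℕ} (r : Fin N) (a c : Fin M) :
    ∃ p : (gridGraph M N).Walk (a, r) (c, r), p.length = Nat.dist (a : ℕ) c := by
  rcases le_total (a : ℕ) (c : ℕ) with hle | hle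
  · obtain ⟨p, hp⟩ := vwalk_aux r ((c : ℕ) - a) a c (by omega)
    exact ⟨p, by simp [Nat.dist]; omega⟩
  · obtain ⟨p, hp⟩ := vwalk_aux r ((a : ℕ) - c) c a (by omega)
    exact ⟨p.reverse, by simp [hp, Nat.dist]; omega⟩

lemma no3col {M N : ℕ} {S : Finset (Fin M × Fin N)} (h : gmv (gridGraph M N) S)
    {r : Fin N} {a b c : Fin M} (ha : (a, r) ∈ S) (hb : (b, r) ∈ S) (hc : (c, r) ∈ S)
    (h1 : (a : ℕ) < b) (h2 : (b : ℕ) < c) : False := by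
  have hne : (a, r) ≠ (c, r) := by
    simp only [ne_eq, Prod.mk.injEq, and_true]
    intro e; rw [e] at h1; omega
  obtain ⟨p, hp, hvis⟩ := h _ ha _ hc hne
  obtain ⟨q, hq⟩ := vwalk r a c
  have hub : (gridGraph M N).dist (a, r) (c, r) ≤ Nat.dist (a : ℕ) c :=
    hq ▸ SimpleGraph.dist_le q
  have hlb := walk_length_lb p
  have hlen : p.length = Nat.dist (a : ℕ) c := by
    simp [Nat.dist_self] at hlb; omega
  have hmem := vkey p rfl hlen b (by simp [Nat.dist]; omega)
  rcases hvis _ hmem hb with e | e <;>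
    · simp only [Prod.mk.injEq, and_true] at e
      rw [e] at h1 h2; omega

/-- Any set in geodesic mutual visibility in the grid graph contains at most
two vertices per row and at most two vertices per column. -/
theorem stmt4 (M N : ℕ) (S : Finset (Fin M × Fin N))
    (h : gmv (gridGraph M N) S) :
    (∀ r : Fin M, (S.filter (fun v => v.1 = r)).card ≤ 2) ∧
    (∀ c : Fin N, (S.filter (fun v => v.2 = c)).card ≤ 2) := by
  constructor
  · intro r
    by_contra hlt
    push_neg at hlt
    obtain ⟨T, hTsub, hT3⟩ := Finset.exists_subset_card_eq hlt
    obtain ⟨x, y, z, hxy, hxz, hyz, rfl⟩ := Finset.card_eq_three.mp hT3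
    have hx := Finset.mem_filter.mp (hTsub (by simp : x ∈ ({x, y, z} : Finset _)))
    have hy := Finset.mem_filter.mp (hTsub (by simp : y ∈ ({x, y, z} : Finset _)))
    have hz := Finset.mem_filter.mp (hTsub (by simp : z ∈ ({x, y, z} : Finset _)))
    have H : ∀ u v w : Fin M × Fin N, u ∈ S → v ∈ S → w ∈ S →
        u.1 = r → v.1 = r → w.1 = r → (u.2 : ℕ) < v.2 → (v.2 : ℕ) < w.2 → False := by
      intro u v w hu hv hw hu1 hv1 hw1 l1 l2
      refine no3row h (r := r) (a := u.2) (b := v.2) (c := w.2) ?_ ?_ ?_ l1 l2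
      · rw [← hu1]; exact hu
      · rw [← hv1]; exact hv
      · rw [← hw1]; exact hw
    have hne : ∀ u v : Fin M × Fin N, u ∈ Finset.filter (fun v => v.1 = r) S →
        v ∈ Finset.filter (fun v => v.1 = r) S → u ≠ v → (u.2 : ℕ) ≠ v.2 := by
      intro u v hu hv huv e
      apply huv
      have hu := Finset.mem_filter.mp hu
      have hv := Finset.mem_filter.mp hv
      exact Prod.ext (hu.2.trans hv.2.symm) (Fin.ext e)
    have exy := hne x y (hTsub (by simp : x ∈ ({x, y, z} : Finset _))) (hTsub (by simp : y ∈ ({x, y, z} : Finset _))) hxy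
    have exz := hne x z (hTsub (by simp : x ∈ ({x, y, z} : Finset _))) (hTsub (by simp : z ∈ ({x, y, z} : Finset _))) hxz
    have eyz := hne y z (hTsub (by simp : y ∈ ({x, y, z} : Finset _))) (hTsub (by simp : z ∈ ({x, y, z} : Finset _))) hyz
    rcases Nat.lt_trichotomy (x.2 : ℕ) (y.2 : ℕ) with h1 | h1 | h1
    · rcases Nat.lt_trichotomy (y.2 : ℕ) (z.2 : ℕ) with h2 | h2 | h2
      · exact H x y z hx.1 hy.1 hz.1 hx.2 hy.2 hz.2 h1 h2
      · exact eyz h2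
      · rcases Nat.lt_trichotomy (x.2 : ℕ) (z.2 : ℕ) with h3 | h3 | h3
        · exact H x z y hx.1 hz.1 hy.1 hx.2 hz.2 hy.2 h3 h2
        · exact exz h3
        · exact H z x y hz.1 hx.1 hy.1 hz.2 hx.2 hy.2 h3 h1
    · exact exy h1
    · rcases Nat.lt_trichotomy (x.2 : ℕ) (z.2 : ℕ) with h2 | h2 | h2
      · exact H y x z hy.1 hx.1 hz.1 hy.2 hx.2 hz.2 h1 h2
      · exact exz h2
      · rcases Nat.lt_trichotomy (y.2 : ℕ) (z.2 : ℕ) with h3 | h3 | h3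
        · exact H y z x hy.1 hz.1 hx.1 hy.2 hz.2 hx.2 h3 h2
        · exact eyz h3
        · exact H z y x hz.1 hy.1 hx.1 hz.2 hy.2 hx.2 h3 h1
  · intro r
    by_contra hlt
    push_neg at hlt
    obtain ⟨T, hTsub, hT3⟩ := Finset.exists_subset_card_eq hlt
    obtain ⟨x, y, z, hxy, hxz, hyz, rfl⟩ := Finset.card_eq_three.mp hT3
    have hx := Finset.mem_filter.mp (hTsub (by simp : x ∈ ({x, y, z} : Finset _)))
    have hy := Finset.mem_filter.mp (hTsub (by simp : y ∈ ({x, y, z} : Finset _)))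
    have hz := Finset.mem_filter.mp (hTsub (by simp : z ∈ ({x, y, z} : Finset _)))
    have H : ∀ u v w : Fin M × Fin N, u ∈ S → v ∈ S → w ∈ S →
        u.2 = r → v.2 = r → w.2 = r → (u.1 : ℕ) < v.1 → (v.1 : ℕ) < w.1 → False := by
      intro u v w hu hv hw hu2 hv2 hw2 l1 l2
      refine no3col h (r := r) (a := u.1) (b := v.1) (c := w.1) ?_ ?_ ?_ l1 l2
      · rw [← hu2]; exact hu
      · rw [← hv2]; exact hv
      · rw [← hw2]; exact hw
    have hne : ∀ u v : Fin M × Fin N, u ∈ Finset.filter (fun v => v.2 = r) S →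
        v ∈ Finset.filter (fun v => v.2 = r) S → u ≠ v → (u.1 : ℕ) ≠ v.1 := by
      intro u v hu hv huv e
      apply huv
      have hu := Finset.mem_filter.mp hu
      have hv := Finset.mem_filter.mp hv
      exact Prod.ext (Fin.ext e) (hu.2.trans hv.2.symm)
    have exy := hne x y (hTsub (by simp : x ∈ ({x, y, z} : Finset _))) (hTsub (by simp : y ∈ ({x, y, z} : Finset _))) hxy
    have exz := hne x z (hTsub (by simp : x ∈ ({x, y, z} : Finset _))) (hTsub (by simp : z ∈ ({x, y, z} : Finset _))) hxz
    have eyz := hne y z (hTsub (by simp : y ∈ ({x, y, z} : Finset _))) (hTsub (by simp : z ∈ ({x, y, z} : Finset _))) hyz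
    rcases Nat.lt_trichotomy (x.1 : ℕ) (y.1 : ℕ) with h1 | h1 | h1
    · rcases Nat.lt_trichotomy (y.1 : ℕ) (z.1 : ℕ) with h2 | h2 | h2
      · exact H x y z hx.1 hy.1 hz.1 hx.2 hy.2 hz.2 h1 h2
      · exact eyz h2
      · rcases Nat.lt_trichotomy (x.1 : ℕ) (z.1 : ℕ) with h3 | h3 | h3
        · exact H x z y hx.1 hz.1 hy.1 hx.2 hz.2 hy.2 h3 h2
        · exact exz h3
        · exact H z x y hz.1 hx.1 hy.1 hz.2 hx.2 hy.2 h3 h1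
    · exact exy h1
    · rcases Nat.lt_trichotomy (x.1 : ℕ) (z.1 : ℕ) with h2 | h2 | h2
      · exact H y x z hy.1 hx.1 hz.1 hy.2 hx.2 hz.2 h1 h2
      · exact exz h2
      · rcases Nat.lt_trichotomy (y.1 : ℕ) (z.1 : ℕ) with h3 | h3 | h3
        · exact H y z x hy.1 hz.1 hx.1 hy.2 hz.2 hx.2 h3 h2
        · exact eyz h3
        · exact H z y x hz.1 hy.1 hx.1 hz.2 hy.2 hx.2 h3 h1
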